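/- Let p be a prime, V a Banach space over ℚ_p, and ρ a continuous action of the additive group ℤ_p on V by continuous ℚ_p-linear automorphisms (ρ : ℤ_p → GL(V) is a group homomorphism into continuous linear automorphisms and the map ℤ_p × V → V, (z,v) ↦ ρ(z)v, is continuous). Suppose there is a real number c with 0 < c < 1 such that ‖ρ(g)v − v‖ ≤ c·‖v‖ for all g ∈ ℤ_p and all v ∈ V. Then the action is locally analytic: for every v ∈ V the orbit map ℤ_p → V, z ↦ ρ(z)v, is locally analytic. -/

import Mathlib

/-!
A continuous action of `ℤ_p` on a `ℚ_p`-Banach space by continuous linear automorphisms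
which is a uniform contraction of the identity (`‖ρ(g)v − v‖ ≤ c‖v‖` with `0 < c < 1`)
is locally analytic: every orbit map `z ↦ ρ(z)v` is locally analytic.
-/

variable {p : ℕ} [Fact p.Prime]

/-- A function `h : ℤ_p → V` with values in a `ℚ_p`-Banach space is locally analytic if
around every point `z₀` it is given, on the coset `z₀ + p^m ℤ_p` for some `m`, by a
convergent power series `h z = ∑' n, (z - z₀)^n • vₙ`. -/
def IsLocallyAnalytic {V : Type*} [NormedAddCommGroup V] [NormedSpace ℚ_[p] V]
    (h : ℤ_[p] → V) : Prop :=
  ∀ z₀ : ℤ_[p], ∃ (m : ℕ) (v : ℕ → V), ∀ z : ℤ_[p], (p : ℤ_[p]) ^ m ∣ z - z₀ →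
    HasSum (fun n : ℕ => (((z - z₀ : ℤ_[p]) : ℚ_[p]) ^ n) • v n) (h z)

lemma aux_inv_le_norm_natCast (n : ℕ) (hn : n ≠ 0) : ((n:ℝ))⁻¹ ≤ ‖(n : ℚ_[p])‖ := by
  have hne : (n : ℚ_[p]) ≠ 0 := Nat.cast_ne_zero.mpr hn
  rw [Padic.norm_eq_zpow_neg_valuation hne, Padic.valuation_natCast]
  have h1 : (p : ℝ) ^ (-(padicValNat p n : ℤ)) = ((p : ℝ) ^ (padicValNat p n : ℕ))⁻¹ := by
    rw [zpow_neg, zpow_natCast]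
  rw [h1]
  have hple : (p:ℕ) ^ (padicValNat p n) ≤ n := Nat.le_of_dvd (Nat.pos_of_ne_zero hn) pow_padicValNat_dvd
  have hp0 : (0:ℝ) < (p:ℝ) := by exact_mod_cast (Fact.out : p.Prime).pos
  have : (0:ℝ) < (p:ℝ) ^ (padicValNat p n : ℕ) := by positivity
  apply inv_anti₀ this
  exact_mod_cast hple

lemma aux_norm_factorial_inv_le (k : ℕ) : ‖((k.factorial : ℚ_[p]))⁻¹‖ ≤ (p:ℝ) ^ k := by
  have hfne : ((k.factorial : ℚ_[p])) ≠ 0 := Nat.cast_ne_zero.mpr k.factorial_ne_zero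
  rw [norm_inv, Padic.norm_eq_zpow_neg_valuation hfne, Padic.valuation_natCast, ← zpow_neg, neg_neg]
  have hv : padicValNat p (k.factorial) ≤ k := by
    have h := sub_one_mul_padicValNat_factorial (p := p) k
    have hp2 : 2 ≤ p := (Fact.out : p.Prime).two_le
    have h1 : padicValNat p k.factorial ≤ (p-1) * padicValNat p k.factorial :=
      Nat.le_mul_of_pos_left _ (by omega)
    have h2 : (p-1) * padicValNat p k.factorial ≤ k := h ▸ Nat.sub_le k _
    omega
  calc (p:ℝ) ^ (padicValNat p k.factorial : ℤ) = (p:ℝ) ^ (padicValNat p k.factorial : ℕ) := by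
        rw [zpow_natCast]
    _ ≤ (p:ℝ) ^ k := by
        apply pow_le_pow_right₀ _ hv
        exact_mod_cast (Fact.out : p.Prime).one_le

lemma aux_norm_choose_le (m k : ℕ) (hk : k ≠ 0) :
    ‖(((p^m).choose k : ℕ) : ℚ_[p])‖ ≤ (k:ℝ) * ((p:ℝ)^m)⁻¹ := by
  obtain ⟨j, rfl⟩ : ∃ j, k = j + 1 := ⟨k - 1, by omega⟩
  have hpm : p ^ m ≠ 0 := pow_ne_zero _ (Fact.out : p.Prime).pos.ne'
  obtain ⟨q, hq⟩ : ∃ q, p ^ m = q + 1 := ⟨p^m - 1, by omega⟩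
  have hnat : (p^m) * q.choose j = (p^m).choose (j+1) * (j+1) := by
    rw [hq]; exact Nat.add_one_mul_choose_eq q j
  have hQ : ((p^m : ℕ) : ℚ_[p]) * (q.choose j : ℚ_[p])
      = ((p^m).choose (j+1) : ℚ_[p]) * ((j+1 : ℕ) : ℚ_[p]) := by
    exact_mod_cast congrArg (Nat.cast : ℕ → ℚ_[p]) hnat
  have hnorm := congrArg norm hQ
  rw [norm_mul, norm_mul] at hnorm
  have hppow : ‖((p^m : ℕ) : ℚ_[p])‖ = ((p:ℝ)^m)⁻¹ := by
    push_cast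
    rw [norm_pow, Padic.norm_p]
    rw [inv_pow]
  have hq1 : ‖(q.choose j : ℚ_[p])‖ ≤ 1 := by
    simpa using Padic.norm_int_le_one (p := p) (q.choose j : ℤ)
  have hjinv : ((j+1:ℝ))⁻¹ ≤ ‖((j+1 : ℕ) : ℚ_[p])‖ := by
    exact_mod_cast aux_inv_le_norm_natCast (j+1) (by omega)
  have hj0 : (0:ℝ) < (j+1:ℝ) := by positivity
  have hp0 : (0:ℝ) < ((p:ℝ)^m) := by
    have : (0:ℝ) < (p:ℝ) := by exact_mod_cast (Fact.out : p.Prime).pos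
    positivity
  have hle : ‖((p^m).choose (j+1) : ℚ_[p])‖ * ((j+1:ℝ))⁻¹ ≤ ((p:ℝ)^m)⁻¹ := by
    calc ‖((p^m).choose (j+1) : ℚ_[p])‖ * ((j+1:ℝ))⁻¹
        ≤ ‖((p^m).choose (j+1) : ℚ_[p])‖ * ‖((j+1 : ℕ) : ℚ_[p])‖ := by
          exact mul_le_mul_of_nonneg_left hjinv (norm_nonneg _)
      _ = ((p:ℝ)^m)⁻¹ * ‖(q.choose j : ℚ_[p])‖ := by rw [← hnorm, hppow]
      _ ≤ ((p:ℝ)^m)⁻¹ * 1 := by exact mul_le_mul_of_nonneg_left hq1 (by positivity)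
      _ = ((p:ℝ)^m)⁻¹ := mul_one _
  calc ‖(((p^m).choose (j+1) : ℕ) : ℚ_[p])‖
      = (j+1:ℝ) * (‖((p^m).choose (j+1) : ℚ_[p])‖ * ((j+1:ℝ))⁻¹) := by
        field_simp
    _ ≤ (j+1:ℝ) * ((p:ℝ)^m)⁻¹ := mul_le_mul_of_nonneg_left hle (le_of_lt hj0)
    _ = ((j+1:ℕ):ℝ) * ((p:ℝ)^m)⁻¹ := by push_cast; ring

lemma aux_desc_eval (u : ℤ_[p]) (k : ℕ) :
    (k.factorial : ℤ_[p]) * Ring.choose u k = (descPochhammer ℤ_[p] k).eval u := by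
  rw [← nsmul_eq_mul, ← Ring.descPochhammer_eq_factorial_smul_choose,
    ← Polynomial.aeval_eq_smeval, Polynomial.aeval_def, ← Polynomial.eval_map,
    descPochhammer_map (algebraMap ℤ ℤ_[p])]

lemma aux_choose_expand (u : ℤ_[p]) (k : ℕ) :
    ((Ring.choose u k : ℤ_[p]) : ℚ_[p]) =
    ∑ j ∈ Finset.range (k+1),
      (((descPochhammer ℤ_[p] k).coeff j : ℚ_[p]) * ((k.factorial : ℚ_[p]))⁻¹) * (u:ℚ_[p])^j := by
  have hfne : ((k.factorial : ℚ_[p])) ≠ 0 := Nat.cast_ne_zero.mpr k.factorial_ne_zero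
  have h1 := aux_desc_eval u k
  have h2 : (k.factorial : ℚ_[p]) * ((Ring.choose u k : ℤ_[p]) : ℚ_[p])
      = (((descPochhammer ℤ_[p] k).eval u : ℤ_[p]) : ℚ_[p]) := by
    exact_mod_cast congrArg (fun x : ℤ_[p] => (x : ℚ_[p])) h1
  have h3 : (((descPochhammer ℤ_[p] k).eval u : ℤ_[p]) : ℚ_[p])
      = ∑ j ∈ Finset.range (k+1), ((descPochhammer ℤ_[p] k).coeff j : ℚ_[p]) * (u:ℚ_[p])^j := by
    rw [Polynomial.eval_eq_sum_range' (n := k+1)]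
    · have hsum : ((∑ i ∈ Finset.range (k+1),
            (descPochhammer ℤ_[p] k).coeff i * u ^ i : ℤ_[p]) : ℚ_[p])
          = ∑ i ∈ Finset.range (k+1),
            (((descPochhammer ℤ_[p] k).coeff i * u ^ i : ℤ_[p]) : ℚ_[p]) :=
        map_sum (PadicInt.Coe.ringHom (p := p)) _ _
      rw [hsum]
      exact Finset.sum_congr rfl fun j _ => by push_cast; rfl
    · have := descPochhammer_natDegree (R := ℤ_[p]) k
      omega
  calc ((Ring.choose u k : ℤ_[p]) : ℚ_[p])
      = ((k.factorial : ℚ_[p]))⁻¹ * ((k.factorial : ℚ_[p]) * ((Ring.choose u k : ℤ_[p]) : ℚ_[p])) := by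
        field_simp
    _ = ((k.factorial : ℚ_[p]))⁻¹ *
        ∑ j ∈ Finset.range (k+1), ((descPochhammer ℤ_[p] k).coeff j : ℚ_[p]) * (u:ℚ_[p])^j := by
        rw [h2, h3]
    _ = ∑ j ∈ Finset.range (k+1),
        (((descPochhammer ℤ_[p] k).coeff j : ℚ_[p]) * ((k.factorial : ℚ_[p]))⁻¹) * (u:ℚ_[p])^j := by
        rw [Finset.mul_sum]
        exact Finset.sum_congr rfl fun j _ => by ring

theorem isLocallyAnalytic_orbit_of_uniform_contraction'
    {V : Type*} [NormedAddCommGroup V] [NormedSpace ℚ_[p] V] [CompleteSpace V]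
    (ρ : ℤ_[p] → (V ≃L[ℚ_[p]] V))
    (hρ_add : ∀ a b : ℤ_[p], ∀ w : V, ρ (a + b) w = ρ a (ρ b w))
    (hρ_cont : Continuous fun q : ℤ_[p] × V => ρ q.1 q.2)
    (c : ℝ) (hc0 : 0 < c) (hc1 : c < 1)
    (hbound : ∀ (g : ℤ_[p]) (w : V), ‖ρ g w - w‖ ≤ c * ‖w‖) :
    ∀ v : V, ∀ z₀ : ℤ_[p], ∃ (m : ℕ) (vv : ℕ → V), ∀ z : ℤ_[p], (p : ℤ_[p]) ^ m ∣ z - z₀ →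
      HasSum (fun n : ℕ => (((z - z₀ : ℤ_[p]) : ℚ_[p]) ^ n) • vv n) (ρ z v) := by
  intro v z₀
  classical
  set A : ℤ_[p] → (V →L[ℚ_[p]] V) := fun g => (ρ g : V →L[ℚ_[p]] V) with hAdef
  have hA : ∀ g w, A g w = ρ g w := fun _ _ => rfl
  have hρ0 : ∀ w : V, ρ 0 w = w := by
    intro w
    have h := hρ_add 0 0 w
    rw [add_zero] at h
    exact ((ρ 0).injective h).symm
  have hiter : ∀ (g : ℤ_[p]) (n : ℕ) (w : V), ρ ((n : ℤ_[p]) * g) w = ((A g)^n) w := by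
    intro g n
    induction n with
    | zero => intro w; simp [hρ0]
    | succ n ih =>
      intro w
      have h1 : ((n+1 : ℕ) : ℤ_[p]) * g = g + (n:ℤ_[p]) * g := by push_cast; ring
      rw [h1, hρ_add, ih, pow_succ']
      rfl
  have hbinom : ∀ (T : V →L[ℚ_[p]] V) (n : ℕ) (w : V),
      (T^n) w = ∑ k ∈ Finset.range (n+1), ((n.choose k : ℚ_[p])) • (((T - 1)^k) w) := by
    intro T n w
    have h1 : T ^ n = ∑ m ∈ Finset.HasAntidiagonal.antidiagonal n,
        n.choose m.1 • ((T-1) ^ m.1 * 1 ^ m.2) := by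
      conv_lhs => rw [← sub_add_cancel T 1]
      exact (Commute.one_right (T-1)).add_pow' n
    rw [h1, Finset.Nat.sum_antidiagonal_eq_sum_range_succ_mk]
    simp only [one_pow, mul_one]
    rw [ContinuousLinearMap.sum_apply]
    refine Finset.sum_congr rfl fun k _ => ?_
    rw [← Nat.cast_smul_eq_nsmul ℚ_[p], ContinuousLinearMap.smul_apply]
  -- the basic contraction operator
  have hN1 : ∀ w : V, ‖(A 1 - 1) w‖ ≤ c * ‖w‖ := by
    intro w
    simpa [ContinuousLinearMap.sub_apply, hA] using hbound 1 w
  have hN1pow : ∀ (k : ℕ) (w : V), ‖((A 1 - 1)^k) w‖ ≤ c^k * ‖w‖ := by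
    intro k
    induction k with
    | zero => intro w; simp
    | succ k ih =>
      intro w
      rw [pow_succ, ContinuousLinearMap.mul_apply]
      calc ‖((A 1 - 1)^k) ((A 1 - 1) w)‖ ≤ c^k * ‖(A 1 - 1) w‖ := ih _
        _ ≤ c^k * (c * ‖w‖) := by
            exact mul_le_mul_of_nonneg_left (hN1 w) (by positivity)
        _ = c^(k+1) * ‖w‖ := by ring
  have hBsum : Summable (fun k : ℕ => (k:ℝ) * c^k) := by
    have := summable_pow_mul_geometric_of_norm_lt_one (R := ℝ) 1
      (r := c) (by rw [Real.norm_eq_abs, abs_of_pos hc0]; exact hc1)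
    simpa using this
  set B := ∑' k : ℕ, (k:ℝ) * c^k with hBdef
  have hB0 : 0 ≤ B := tsum_nonneg (fun k => by positivity)
  have hp1 : (1:ℝ) < (p:ℝ) := by exact_mod_cast (Fact.out : p.Prime).one_lt
  have hp0 : (0:ℝ) < (p:ℝ) := lt_trans one_pos hp1
  obtain ⟨m, hm⟩ := pow_unbounded_of_one_lt (B * (p:ℝ)^2) hp1
  set ε : ℝ := ((p:ℝ)^2)⁻¹ with hεdef
  have hε0 : 0 < ε := by positivity
  have hε1 : ε < 1 := by
    rw [hεdef]
    rw [inv_lt_one_iff₀]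
    right
    nlinarith
  set N : V →L[ℚ_[p]] V := A ((p:ℤ_[p])^m) - 1 with hNdef
  have hApm : ∀ w : V, ρ ((p:ℤ_[p])^m) w = ((A 1)^(p^m)) w := by
    intro w
    have h1 : ((p^m : ℕ) : ℤ_[p]) * 1 = (p:ℤ_[p])^m := by push_cast; ring
    rw [← h1]
    exact hiter 1 (p^m) w
  have hNw : ∀ w : V, ‖N w‖ ≤ ε * ‖w‖ := by
    intro w
    have hpm1 : 0 < p^m := Nat.pow_pos (Fact.out : p.Prime).pos
    have h2 : N w = ∑ k ∈ Finset.Ico 1 (p^m+1), (((p^m).choose k : ℚ_[p])) • (((A 1 - 1)^k) w) := by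
      have h3 : N w = ((A 1)^(p^m)) w - w := by
        rw [hNdef, ContinuousLinearMap.sub_apply, ContinuousLinearMap.one_apply, hA, hApm]
      rw [h3, hbinom (A 1) (p^m) w, Finset.range_eq_Ico,
        Finset.sum_eq_sum_Ico_succ_bot (by omega : 0 < p^m + 1)]
      simp only [Nat.choose_zero_right, Nat.cast_one, pow_zero, ContinuousLinearMap.one_apply,
        one_smul]
      abel
    rw [h2]
    have hterm : ∀ k ∈ Finset.Ico 1 (p^m+1),
        ‖(((p^m).choose k : ℚ_[p])) • (((A 1 - 1)^k) w)‖
          ≤ (((p:ℝ)^m)⁻¹ * ((k:ℝ) * c^k)) * ‖w‖ := by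
      intro k hk
      rw [Finset.mem_Ico] at hk
      rw [norm_smul]
      calc ‖(((p^m).choose k : ℚ_[p]))‖ * ‖((A 1 - 1)^k) w‖
          ≤ ((k:ℝ) * ((p:ℝ)^m)⁻¹) * (c^k * ‖w‖) := by
            apply mul_le_mul (aux_norm_choose_le m k (by omega)) (hN1pow k w) (norm_nonneg _)
            positivity
        _ = (((p:ℝ)^m)⁻¹ * ((k:ℝ) * c^k)) * ‖w‖ := by ring
    calc ‖∑ k ∈ Finset.Ico 1 (p^m+1), (((p^m).choose k : ℚ_[p])) • (((A 1 - 1)^k) w)‖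
        ≤ ∑ k ∈ Finset.Ico 1 (p^m+1), ‖(((p^m).choose k : ℚ_[p])) • (((A 1 - 1)^k) w)‖ :=
          norm_sum_le _ _
      _ ≤ ∑ k ∈ Finset.Ico 1 (p^m+1), (((p:ℝ)^m)⁻¹ * ((k:ℝ) * c^k)) * ‖w‖ :=
          Finset.sum_le_sum hterm
      _ = (((p:ℝ)^m)⁻¹ * ∑ k ∈ Finset.Ico 1 (p^m+1), (k:ℝ) * c^k) * ‖w‖ := by
          rw [← Finset.sum_mul, Finset.mul_sum]
      _ ≤ (((p:ℝ)^m)⁻¹ * B) * ‖w‖ := by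
          have hs := Summable.sum_le_tsum (Finset.Ico 1 (p^m+1))
            (fun k _ => by positivity) hBsum
          have h4 : ((p:ℝ)^m)⁻¹ * ∑ k ∈ Finset.Ico 1 (p^m+1), (k:ℝ) * c^k ≤ ((p:ℝ)^m)⁻¹ * B := by
            apply mul_le_mul_of_nonneg_left hs (by positivity)
          exact mul_le_mul_of_nonneg_right h4 (norm_nonneg _)
      _ ≤ ε * ‖w‖ := by
          apply mul_le_mul_of_nonneg_right _ (norm_nonneg _)
          have h5 : (0:ℝ) < (p:ℝ)^m := by positivity
          have h6 : (0:ℝ) < (p:ℝ)^2 := by positivity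
          rw [hεdef, show ((p:ℝ)^m)⁻¹ * B = B / (p:ℝ)^m from by ring,
            show ((p:ℝ)^2)⁻¹ = 1 / (p:ℝ)^2 from by ring, div_le_div_iff₀ h5 h6]
          nlinarith
  have hNpow : ∀ (k : ℕ) (w : V), ‖(N^k) w‖ ≤ ε^k * ‖w‖ := by
    intro k
    induction k with
    | zero => intro w; simp
    | succ k ih =>
      intro w
      rw [pow_succ, ContinuousLinearMap.mul_apply]
      calc ‖(N^k) (N w)‖ ≤ ε^k * ‖N w‖ := ih _
        _ ≤ ε^k * (ε * ‖w‖) := by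
            exact mul_le_mul_of_nonneg_left (hNw w) (by positivity)
        _ = ε^(k+1) * ‖w‖ := by ring
  set C₀ : ℝ := ‖A z₀‖ with hC0def
  have hC00 : 0 ≤ C₀ := norm_nonneg _
  set a : ℕ → V := fun k => A z₀ ((N^k) v) with hadef
  have ha : ∀ k, ‖a k‖ ≤ (C₀ * ‖v‖) * ε^k := by
    intro k
    calc ‖a k‖ ≤ C₀ * ‖(N^k) v‖ := (A z₀).le_opNorm _
      _ ≤ C₀ * (ε^k * ‖v‖) := mul_le_mul_of_nonneg_left (hNpow k v) hC00
      _ = (C₀ * ‖v‖) * ε^k := by ring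
  set d : ℕ → ℕ → ℚ_[p] :=
    fun k j => ((descPochhammer ℤ_[p] k).coeff j : ℚ_[p]) * ((k.factorial : ℚ_[p]))⁻¹ with hddef
  have hdnorm : ∀ k j, ‖d k j‖ ≤ (p:ℝ)^k := by
    intro k j
    rw [hddef]
    simp only
    rw [norm_mul]
    have h1 : ‖((descPochhammer ℤ_[p] k).coeff j : ℚ_[p])‖ ≤ 1 := by
      rw [PadicInt.padic_norm_e_of_padicInt]
      exact PadicInt.norm_le_one _
    calc ‖((descPochhammer ℤ_[p] k).coeff j : ℚ_[p])‖ * ‖((k.factorial : ℚ_[p]))⁻¹‖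
        ≤ 1 * (p:ℝ)^k := mul_le_mul h1 (aux_norm_factorial_inv_le k) (norm_nonneg _) zero_le_one
      _ = (p:ℝ)^k := one_mul _
  have hdzero : ∀ k j, k < j → d k j = 0 := by
    intro k j hkj
    rw [hddef]
    simp only
    rw [Polynomial.coeff_eq_zero_of_natDegree_lt]
    · simp
    · rw [descPochhammer_natDegree]; exact hkj
  set q : ℝ := (p:ℝ)⁻¹ with hqdef
  have hq0 : 0 ≤ q := by positivity
  have hq1 : q < 1 := by
    rw [hqdef, inv_lt_one_iff₀]; right; exact hp1
  have hkey : ∀ k:ℕ, (p:ℝ)^k * ε^k = q^k := by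
    intro k
    rw [← mul_pow]
    congr 1
    rw [hεdef, hqdef]
    field_simp
  have hterm : ∀ k j, ‖d k j • a k‖ ≤ (C₀ * ‖v‖) * q^k := by
    intro k j
    rw [norm_smul]
    calc ‖d k j‖ * ‖a k‖ ≤ (p:ℝ)^k * ((C₀*‖v‖) * ε^k) :=
        mul_le_mul (hdnorm k j) (ha k) (norm_nonneg _) (by positivity)
      _ = (C₀*‖v‖) * ((p:ℝ)^k * ε^k) := by ring
      _ = (C₀*‖v‖) * q^k := by rw [hkey]
  have hwsummable : ∀ j, Summable (fun k => d k j • a k) := by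
    intro j
    apply Summable.of_norm
    apply Summable.of_nonneg_of_le (fun k => norm_nonneg _) (fun k => hterm k j)
    exact (summable_geometric_of_lt_one hq0 hq1).mul_left _
  set w : ℕ → V := fun j => ∑' k, d k j • a k with hwdef
  have hwHasSum : ∀ j, HasSum (fun k => d k j • a k) (w j) := fun j => (hwsummable j).hasSum
  refine ⟨m, fun j => (((p:ℚ_[p])^m)⁻¹)^j • w j, ?_⟩
  have hg2summ : ∀ u : ℤ_[p], Summable (fun k => ((Ring.choose u k : ℤ_[p]) : ℚ_[p]) • ((N^k) v)) := by
    intro u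
    apply Summable.of_norm
    apply Summable.of_nonneg_of_le (fun k => norm_nonneg _) (fun k => ?_)
      ((summable_geometric_of_lt_one hε0.le hε1).mul_right ‖v‖)
    rw [norm_smul]
    have h1 : ‖((Ring.choose u k : ℤ_[p]) : ℚ_[p])‖ ≤ 1 := by
      rw [PadicInt.padic_norm_e_of_padicInt]
      exact PadicInt.norm_le_one _
    calc ‖((Ring.choose u k : ℤ_[p]) : ℚ_[p])‖ * ‖(N^k) v‖
        ≤ 1 * (ε^k * ‖v‖) := mul_le_mul h1 (hNpow k v) (norm_nonneg _) zero_le_one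
      _ = ε^k * ‖v‖ := one_mul _
  have hg1g2 : ∀ u : ℤ_[p],
      ρ ((p:ℤ_[p])^m * u) v = ∑' k, ((Ring.choose u k : ℤ_[p]) : ℚ_[p]) • ((N^k) v) := by
    have hcont1 : Continuous fun u : ℤ_[p] => ρ ((p:ℤ_[p])^m * u) v := by
      have h1 : Continuous fun u : ℤ_[p] => (((p:ℤ_[p])^m * u, v) : ℤ_[p] × V) :=
        (continuous_const.mul continuous_id).prodMk continuous_const
      exact hρ_cont.comp h1
    have hcont2 : Continuous fun u : ℤ_[p] =>
        ∑' k, ((Ring.choose u k : ℤ_[p]) : ℚ_[p]) • ((N^k) v) := by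
      apply continuous_tsum (u := fun k => ε^k * ‖v‖)
      · intro k
        exact (continuous_induced_rng.mp (PadicInt.continuous_choose k)).smul continuous_const
      · exact (summable_geometric_of_lt_one hε0.le hε1).mul_right _
      · intro k u
        rw [norm_smul]
        have h1 : ‖((Ring.choose u k : ℤ_[p]) : ℚ_[p])‖ ≤ 1 := by
          rw [PadicInt.padic_norm_e_of_padicInt]
          exact PadicInt.norm_le_one _
        calc ‖((Ring.choose u k : ℤ_[p]) : ℚ_[p])‖ * ‖(N^k) v‖
            ≤ 1 * (ε^k * ‖v‖) := mul_le_mul h1 (hNpow k v) (norm_nonneg _) zero_le_one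
          _ = ε^k * ‖v‖ := one_mul _
    have hag : (fun u : ℤ_[p] => ρ ((p:ℤ_[p])^m * u) v) ∘ (Nat.cast : ℕ → ℤ_[p])
        = (fun u : ℤ_[p] => ∑' k, ((Ring.choose u k : ℤ_[p]) : ℚ_[p]) • ((N^k) v))
          ∘ (Nat.cast : ℕ → ℤ_[p]) := by
      funext n
      simp only [Function.comp_apply]
      have h1 : (p:ℤ_[p])^m * (n:ℤ_[p]) = ((n:ℕ):ℤ_[p]) * (p:ℤ_[p])^m := by ring
      rw [h1, hiter ((p:ℤ_[p])^m) n v, hbinom (A ((p:ℤ_[p])^m)) n v]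
      rw [tsum_eq_sum (s := Finset.range (n+1)) ?_]
      · refine Finset.sum_congr rfl fun k hk => ?_
        rw [Ring.choose_natCast]
        push_cast
        rfl
      · intro k hk
        rw [Ring.choose_natCast, Nat.choose_eq_zero_of_lt (by simpa using hk)]
        simp
    exact fun u => congrFun (PadicInt.denseRange_natCast.equalizer hcont1 hcont2 hag) u
  intro z hz
  obtain ⟨u, hu⟩ := hz
  have hzρ : ρ z v = ρ z₀ (ρ ((p:ℤ_[p])^m * u) v) := by
    have h1 : z = z₀ + (p:ℤ_[p])^m * u := by rw [← hu]; ring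
    rw [h1]
    exact hρ_add _ _ v
  obtain ⟨S, hS⟩ := hg2summ u
  have hg1S : ρ ((p:ℤ_[p])^m * u) v = S := (hg1g2 u).trans hS.tsum_eq
  have hSA : HasSum (fun k => ((Ring.choose u k : ℤ_[p]) : ℚ_[p]) • a k) (A z₀ S) := by
    have h1 := hS.mapL (A z₀)
    simpa only [hadef, map_smul] using h1
  set F : ℕ × ℕ → V := fun kj => (d kj.1 kj.2 * ((u:ℚ_[p]))^kj.2) • a kj.1 with hFdef
  have hFzero : ∀ k j, j ∉ Finset.range (k+1) → F (k,j) = 0 := by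
    intro k j hj
    have h1 : d k j = 0 := hdzero k j (by simpa using hj)
    simp [hFdef, h1]
  have hFrow : ∀ k, HasSum (fun j => F (k, j)) (((Ring.choose u k : ℤ_[p]) : ℚ_[p]) • a k) := by
    intro k
    have h1 := hasSum_sum_of_ne_finset_zero (L := SummationFilter.unconditional ℕ) (hFzero k)
    convert h1 using 1
    rw [hFdef]
    simp only
    rw [← Finset.sum_smul]
    congr 1
    rw [aux_choose_expand u k, hddef]
  have hu1 : ‖((u:ℚ_[p]))‖ ≤ 1 := by
    rw [PadicInt.padic_norm_e_of_padicInt]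
    exact PadicInt.norm_le_one u
  have hFbound : ∀ k j, ‖F (k,j)‖ ≤ (C₀*‖v‖) * q^k := by
    intro k j
    rw [hFdef]
    simp only
    rw [norm_smul, norm_mul, norm_pow]
    calc ‖d k j‖ * ‖((u:ℚ_[p]))‖^j * ‖a k‖
        ≤ ((p:ℝ)^k * 1) * ((C₀*‖v‖) * ε^k) := by
          apply mul_le_mul _ (ha k) (norm_nonneg _) (by positivity)
          exact mul_le_mul (hdnorm k j) (pow_le_one₀ (norm_nonneg _) hu1)
            (by positivity) (by positivity)
      _ = (C₀*‖v‖) * ((p:ℝ)^k * ε^k) := by ring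
      _ = (C₀*‖v‖) * q^k := by rw [hkey]
  have hFnormrow : ∀ k, Summable (fun j => ‖F (k,j)‖) := by
    intro k
    apply summable_of_ne_finset_zero (s := Finset.range (k+1))
    intro j hj
    rw [hFzero k j hj, norm_zero]
  have hFtsumrow : ∀ k, (∑' j, ‖F (k,j)‖) ≤ ((k:ℝ)+1) * ((C₀*‖v‖) * q^k) := by
    intro k
    rw [tsum_eq_sum (s := Finset.range (k+1)) (fun j hj => by rw [hFzero k j hj, norm_zero])]
    calc ∑ j ∈ Finset.range (k+1), ‖F (k,j)‖
        ≤ ∑ _j ∈ Finset.range (k+1), (C₀*‖v‖) * q^k :=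
          Finset.sum_le_sum (fun j _ => hFbound k j)
      _ = ((k:ℝ)+1) * ((C₀*‖v‖) * q^k) := by
          rw [Finset.sum_const, Finset.card_range, nsmul_eq_mul]
          push_cast
          ring
  have hsummable_kq : Summable (fun k : ℕ => ((k:ℝ)+1) * ((C₀*‖v‖) * q^k)) := by
    have h1 : Summable (fun k : ℕ => (k:ℝ) * q^k) := by
      have := summable_pow_mul_geometric_of_norm_lt_one (R := ℝ) 1
        (r := q) (by rw [Real.norm_eq_abs, abs_of_nonneg hq0]; exact hq1)
      simpa using this
    have h2 : Summable (fun k : ℕ => q^k) := summable_geometric_of_lt_one hq0 hq1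
    have h3 := (h1.add h2).mul_left (C₀*‖v‖)
    apply h3.congr
    intro k
    ring
  have hFnorm : Summable (fun kj : ℕ × ℕ => ‖F kj‖) := by
    apply (summable_prod_of_nonneg (fun kj => norm_nonneg _)).mpr
    exact ⟨hFnormrow, Summable.of_nonneg_of_le
      (fun k => tsum_nonneg fun j => norm_nonneg _) hFtsumrow hsummable_kq⟩
  obtain ⟨T, hFT⟩ := hFnorm.of_norm
  have hTS : T = A z₀ S := HasSum.unique (hFT.prod_fiberwise hFrow) hSA
  have hcols : ∀ j, HasSum (fun k => F (k, j)) (((u:ℚ_[p]))^j • w j) := by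
    intro j
    have h := (hwHasSum j).const_smul (((u:ℚ_[p]))^j)
    have heq : (fun k => F (k, j)) = fun k => ((u:ℚ_[p]))^j • (d k j • a k) := by
      funext k
      rw [hFdef]
      simp only
      rw [smul_smul, mul_comm]
    rw [heq]
    exact h
  have hswap : HasSum (fun jk : ℕ × ℕ => F (jk.2, jk.1)) T :=
    ((Equiv.prodComm ℕ ℕ).hasSum_iff (f := F) (a := T)).mpr hFT
  have hfinal : HasSum (fun j => ((u:ℚ_[p]))^j • w j) T := hswap.prod_fiberwise hcols
  have hpne : ((p:ℚ_[p]))^m ≠ 0 :=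
    pow_ne_zero _ (by exact_mod_cast (Fact.out : p.Prime).ne_zero)
  have hzu : ((z - z₀ : ℤ_[p]) : ℚ_[p]) = (p:ℚ_[p])^m * (u:ℚ_[p]) := by
    rw [hu]; push_cast; ring
  have hterm2 : ∀ n : ℕ, (((z - z₀ : ℤ_[p]) : ℚ_[p]))^n • ((((p:ℚ_[p])^m)⁻¹)^n • w n)
      = ((u:ℚ_[p]))^n • w n := by
    intro n
    rw [smul_smul]
    congr 1
    rw [hzu]
    rw [mul_pow, inv_pow, mul_right_comm, mul_inv_cancel₀ (pow_ne_zero _ hpne), one_mul]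
  have hval : ρ z v = T := by
    rw [hzρ, hg1S, hTS]
    rfl
  have hfun : (fun n : ℕ => (((z - z₀ : ℤ_[p]) : ℚ_[p]))^n • ((((p:ℚ_[p])^m)⁻¹)^n • w n))
      = fun n => ((u:ℚ_[p]))^n • w n := funext hterm2
  rw [hval, hfun]
  exact hfinal


theorem isLocallyAnalytic_orbit_of_uniform_contraction
    {V : Type*} [NormedAddCommGroup V] [NormedSpace ℚ_[p] V] [CompleteSpace V]
    (ρ : ℤ_[p] → (V ≃L[ℚ_[p]] V))
    (hρ_add : ∀ a b : ℤ_[p], ∀ w : V, ρ (a + b) w = ρ a (ρ b w))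
    (hρ_cont : Continuous fun q : ℤ_[p] × V => ρ q.1 q.2)
    (c : ℝ) (hc0 : 0 < c) (hc1 : c < 1)
    (hbound : ∀ (g : ℤ_[p]) (w : V), ‖ρ g w - w‖ ≤ c * ‖w‖) :
    ∀ v : V, IsLocallyAnalytic (fun z => ρ z v) := by
  intro v z₀
  exact isLocallyAnalytic_orbit_of_uniform_contraction' ρ hρ_add hρ_cont c hc0 hc1 hbound v z₀
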